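/- If a measure space (Ω, 𝒜, μ) is locally determined and weakly localisable, then it is localisable. -/

import Mathlib

open MeasureTheory Set ENNReal

/-- A set `B` is locally measurable if `B ∩ A` is measurable for every measurable set `A`
of finite measure. -/
def LocallyMeasurable {Ω : Type*} [MeasurableSpace Ω] (μ : Measure Ω) (B : Set Ω) : Prop :=
  ∀ A : Set Ω, MeasurableSet A → μ A < ∞ → MeasurableSet (B ∩ A)

/-- A measure space is semi-finite if every measurable set of infinite measure contains
a measurable subset of finite positive measure. -/
def SemiFinite {Ω : Type*} [MeasurableSpace Ω] (μ : Measure Ω) : Prop :=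
  ∀ B : Set Ω, MeasurableSet B → μ B = ∞ →
    ∃ A : Set Ω, MeasurableSet A ∧ A ⊆ B ∧ 0 < μ A ∧ μ A < ∞

/-- A measure space is localisable if it is semi-finite and every family of measurable
sets has an essential supremum: a smallest measurable set (up to null sets) containing
each member of the family up to null sets. -/
def Localisable {Ω : Type*} [MeasurableSpace Ω] (μ : Measure Ω) : Prop :=
  SemiFinite μ ∧
  ∀ E : Set (Set Ω), (∀ B ∈ E, MeasurableSet B) →
    ∃ S : Set Ω, MeasurableSet S ∧ (∀ B ∈ E, μ (B \ S) = 0) ∧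
      ∀ C : Set Ω, MeasurableSet C → (∀ B ∈ E, μ (B \ C) = 0) → μ (S \ C) = 0

/-- A measure space is weakly localisable if every consistent family of measurable
functions `f_A : A → ℝ`, indexed by the measurable sets `A` of finite measure, is
realised `μ`-a.e. on each `A` by a single locally measurable function. -/
def WeaklyLocalisable {Ω : Type*} [MeasurableSpace Ω] (μ : Measure Ω) : Prop :=
  ∀ f : Set Ω → Ω → ℝ,
    (∀ A : Set Ω, MeasurableSet A → μ A < ∞ → Measurable (A.indicator (f A))) →
    (∀ A B : Set Ω, MeasurableSet A → μ A < ∞ → MeasurableSet B → μ B < ∞ →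
      ∀ᵐ x ∂(μ.restrict (A ∩ B)), f A x = f B x) →
    ∃ g : Ω → ℝ, (∀ A : Set Ω, MeasurableSet A → μ A < ∞ → Measurable (A.indicator g)) ∧
      ∀ A : Set Ω, MeasurableSet A → μ A < ∞ → ∀ᵐ x ∂(μ.restrict A), g x = f A x

/-- A measure space is locally determined if it is semi-finite and every locally
measurable set is measurable. -/
def LocallyDetermined {Ω : Type*} [MeasurableSpace Ω] (μ : Measure Ω) : Prop :=
  SemiFinite μ ∧ ∀ B : Set Ω, LocallyMeasurable μ B → MeasurableSet B

open Filter Topology in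
lemma exists_finite_essSup {Ω : Type*} [MeasurableSpace Ω] (μ : Measure Ω)
    (E : Set (Set Ω)) (hE : ∀ B ∈ E, MeasurableSet B)
    (A : Set Ω) (hA : MeasurableSet A) (hfin : μ A < ∞) :
    ∃ S : Set Ω, MeasurableSet S ∧ S ⊆ A ∧ (∀ B ∈ E, μ ((B ∩ A) \ S) = 0) ∧
      ∀ C : Set Ω, MeasurableSet C → (∀ B ∈ E, μ ((B ∩ A) \ C) = 0) → μ (S \ C) = 0 := by
  classical
  set F : Set (Set Ω) := insert ∅ E with hF
  have hFmeas : ∀ B ∈ F, MeasurableSet B := by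
    rintro B (rfl | hB)
    · exact MeasurableSet.empty
    · exact hE B hB
  set K : Set ℝ≥0∞ :=
    {r | ∃ s : ℕ → Set Ω, (∀ n, s n ∈ F) ∧ μ (⋃ n, s n ∩ A) = r} with hK
  have hKne : K.Nonempty :=
    ⟨μ (⋃ _n : ℕ, (∅ : Set Ω) ∩ A), fun _ => ∅, fun _ => mem_insert _ _, rfl⟩
  have hKle : ∀ r ∈ K, r ≤ μ A := by
    rintro r ⟨s, hs, rfl⟩
    exact measure_mono (iUnion_subset fun n => inter_subset_right)
  have hcfin : sSup K < ∞ := lt_of_le_of_lt (sSup_le hKle) hfin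
  obtain ⟨u, hu_mono, hu_tendsto, hu_mem⟩ := exists_seq_tendsto_sSup hKne ⟨μ A, hKle⟩
  choose s hs hμs using hu_mem
  set t : ℕ → Set Ω := fun m => s m.unpair.1 m.unpair.2 with ht
  set S : Set Ω := ⋃ m, t m ∩ A with hS
  have htF : ∀ m, t m ∈ F := fun m => hs _ _
  have hSm : MeasurableSet S := MeasurableSet.iUnion fun m => (hFmeas _ (htF m)).inter hA
  have hSA : S ⊆ A := iUnion_subset fun m => inter_subset_right
  have hSK : μ S ∈ K := ⟨t, htF, rfl⟩
  have hge : sSup K ≤ μ S := by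
    refine le_of_tendsto hu_tendsto (Filter.Eventually.of_forall fun n => ?_)
    rw [← hμs n]
    refine measure_mono (iUnion_subset fun k x hx => ?_)
    exact mem_iUnion.2 ⟨Nat.pair n k, by simpa [ht, Nat.unpair_pair] using hx⟩
  have hμS : μ S = sSup K := le_antisymm (le_sSup hSK) hge
  have hSfin : μ S < ∞ := hμS ▸ hcfin
  refine ⟨S, hSm, hSA, ?_, ?_⟩
  · intro B hB
    have hmem : μ (S ∪ (B ∩ A)) ∈ K := by
      refine ⟨fun m => Nat.casesOn m B t, ?_, ?_⟩
      · rintro (_ | m)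
        · exact mem_insert_of_mem _ hB
        · exact htF m
      · congr 1
        ext x
        simp only [mem_iUnion, mem_union, mem_inter_iff, hS]
        constructor
        · rintro ⟨(_ | m), hx⟩
          · exact Or.inr hx
          · exact Or.inl ⟨m, hx⟩
        · rintro (⟨m, hx⟩ | hx)
          · exact ⟨m + 1, hx⟩
          · exact ⟨0, hx⟩
    have hle2 : μ (S ∪ (B ∩ A)) ≤ μ S := hμS ▸ le_sSup hmem
    have h2 : μ S + μ ((B ∩ A) \ S) = μ (S ∪ (B ∩ A)) := measure_add_diff hSm.nullMeasurableSet _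
    have h3 : μ S + μ ((B ∩ A) \ S) ≤ μ S + 0 := by
      rw [add_zero, h2]; exact hle2
    exact le_antisymm ((ENNReal.add_le_add_iff_left hSfin.ne).mp h3) zero_le
  · intro C hC hBC
    have hsub : S \ C ⊆ ⋃ m, (t m ∩ A) \ C := by
      rw [hS, iUnion_diff]
    refine measure_mono_null hsub (le_antisymm (le_trans (measure_iUnion_le _) ?_) zero_le)
    have hz : ∀ m, μ ((t m ∩ A) \ C) = 0 := by
      intro m
      rcases htF m with h | h
      · simp [h]
      · exact measure_mono_null (diff_subset_diff_left (inter_subset_inter_left _ subset_rfl)) (hBC _ h)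
    simp [hz]

/-- A locally determined, weakly localisable measure space is localisable. -/
theorem localisable_of_locallyDetermined_weaklyLocalisable
    {Ω : Type*} [MeasurableSpace Ω] (μ : Measure Ω)
    (hld : LocallyDetermined μ) (hwl : WeaklyLocalisable μ) : Localisable μ := by
  classical
  obtain ⟨hsf, hldet⟩ := hld
  refine ⟨hsf, fun E hE => ?_⟩
  -- choose essential suprema on finite measure sets
  have hsel : ∀ A : Set Ω, ∃ SA : Set Ω, (MeasurableSet A ∧ μ A < ∞) →
      MeasurableSet SA ∧ SA ⊆ A ∧ (∀ B ∈ E, μ ((B ∩ A) \ SA) = 0) ∧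
        ∀ C, MeasurableSet C → (∀ B ∈ E, μ ((B ∩ A) \ C) = 0) → μ (SA \ C) = 0 := by
    intro A
    by_cases h : MeasurableSet A ∧ μ A < ∞
    · obtain ⟨S, hS⟩ := exists_finite_essSup μ E hE A h.1 h.2
      exact ⟨S, fun _ => hS⟩
    · exact ⟨∅, fun h' => absurd h' h⟩
  choose SA hSA using hsel
  set f : Set Ω → Ω → ℝ := fun A => (SA A).indicator (fun _ => 1) with hf
  -- measurability of the family
  have hfmeas : ∀ A : Set Ω, MeasurableSet A → μ A < ∞ → Measurable (A.indicator (f A)) := by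
    intro A hAm hAfin
    obtain ⟨hSAm, hSAsub, -, -⟩ := hSA A ⟨hAm, hAfin⟩
    have : A.indicator (f A) = (SA A).indicator (fun _ => (1:ℝ)) := by
      rw [hf]
      rw [Set.indicator_indicator, inter_eq_right.mpr hSAsub]
    rw [this]
    exact measurable_const.indicator hSAm
  -- key: essential suprema are compatible
  have hcompat : ∀ A B : Set Ω, MeasurableSet A → μ A < ∞ → MeasurableSet B → μ B < ∞ →
      μ ((SA A ∩ (A ∩ B)) \ SA B) = 0 := by
    intro A B hAm hAfin hBm hBfin
    obtain ⟨hSAm, hSAsub, hubA, hminA⟩ := hSA A ⟨hAm, hAfin⟩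
    obtain ⟨hSBm, hSBsub, hubB, hminB⟩ := hSA B ⟨hBm, hBfin⟩
    have hC : MeasurableSet (SA B ∪ (A \ B)) := hSBm.union (hAm.diff hBm)
    have hub : ∀ B' ∈ E, μ ((B' ∩ A) \ (SA B ∪ (A \ B))) = 0 := by
      intro B' hB'
      refine measure_mono_null ?_ (hubB B' hB')
      rintro x ⟨⟨hxB', hxA⟩, hxC⟩
      simp only [mem_union, mem_diff, not_or, not_and, not_not] at hxC
      exact ⟨⟨hxB', hxC.2 hxA⟩, hxC.1⟩
    refine measure_mono_null ?_ (hminA _ hC hub)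
    rintro x ⟨⟨hxS, hxA, hxB⟩, hxSB⟩
    exact ⟨hxS, by simp [hxSB, hxA, hxB]⟩
  -- consistency
  have hcons : ∀ A B : Set Ω, MeasurableSet A → μ A < ∞ → MeasurableSet B → μ B < ∞ →
      ∀ᵐ x ∂(μ.restrict (A ∩ B)), f A x = f B x := by
    intro A B hAm hAfin hBm hBfin
    rw [ae_iff, Measure.restrict_apply' (hAm.inter hBm)]
    refine measure_mono_null ?_
      (measure_union_null (hcompat A B hAm hAfin hBm hBfin) (by
        have := hcompat B A hBm hBfin hAm hAfin
        rwa [inter_comm B A] at this))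
    rintro x ⟨hxne, hxAB⟩
    simp only [mem_setOf_eq, hf] at hxne
    by_cases h1 : x ∈ SA A <;> by_cases h2 : x ∈ SA B
    · exact absurd (by simp [Set.indicator_of_mem, h1, h2]) hxne
    · exact Or.inl ⟨⟨h1, hxAB⟩, h2⟩
    · exact Or.inr ⟨⟨h2, hxAB⟩, h1⟩
    · exact absurd (by simp [Set.indicator_of_notMem, h1, h2]) hxne
  obtain ⟨g, hgmeas, hgae⟩ := hwl f hfmeas hcons
  set S : Set Ω := {x | g x ≠ 0} with hSdef
  have hSloc : LocallyMeasurable μ S := by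
    intro A hAm hAfin
    have hkey : S ∩ A = (A.indicator g) ⁻¹' ({0}ᶜ) := by
      ext x
      simp only [mem_inter_iff, mem_preimage, mem_compl_iff, mem_singleton_iff, hSdef,
        mem_setOf_eq]
      constructor
      · rintro ⟨hx, hxA⟩
        rwa [Set.indicator_of_mem hxA]
      · intro h
        have hxA : x ∈ A := by
          by_contra hxA
          exact h (Set.indicator_of_notMem hxA g)
        exact ⟨by rwa [Set.indicator_of_mem hxA] at h, hxA⟩
    rw [hkey]
    exact hgmeas A hAm hAfin (measurableSet_singleton 0).compl
  have hSm : MeasurableSet S := hldet S hSloc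
  refine ⟨S, hSm, ?_, ?_⟩
  · -- S is an upper bound
    intro B hB
    by_contra hne
    have hBS : MeasurableSet (B \ S) := (hE B hB).diff hSm
    obtain ⟨A, hAm, hAsub, hApos, hAfin⟩ :
        ∃ A, MeasurableSet A ∧ A ⊆ B \ S ∧ 0 < μ A ∧ μ A < ∞ := by
      rcases eq_or_ne (μ (B \ S)) ∞ with h | h
      · exact hsf _ hBS h
      · exact ⟨B \ S, hBS, subset_rfl, pos_iff_ne_zero.mpr hne, lt_top_iff_ne_top.mpr h⟩
    obtain ⟨hSAm, hSAsub, hub, hmin⟩ := hSA A ⟨hAm, hAfin⟩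
    have hnull1 : μ (A \ SA A) = 0 := by
      refine measure_mono_null ?_ (hub B hB)
      exact diff_subset_diff_left fun x hx => ⟨(hAsub hx).1, hx⟩
    have hnull2 : μ ({x | g x ≠ f A x} ∩ A) = 0 := by
      have := hgae A hAm hAfin
      rw [ae_iff, Measure.restrict_apply' hAm] at this
      exact this
    have hcover : A ⊆ ({x | g x ≠ f A x} ∩ A) ∪ (A \ SA A) ∪ (S ∩ A) := by
      intro x hxA
      by_cases h1 : g x = f A x
      · by_cases h2 : x ∈ SA A
        · refine Or.inr ⟨?_, hxA⟩
          simp only [hSdef, mem_setOf_eq, h1, hf]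
          simp [Set.indicator_of_mem h2]
        · exact Or.inl (Or.inr ⟨hxA, h2⟩)
      · exact Or.inl (Or.inl ⟨h1, hxA⟩)
    have hSA0 : μ (S ∩ A) = 0 := by
      have : S ∩ A = ∅ := by
        ext x
        simp only [mem_inter_iff, mem_empty_iff_false, iff_false, not_and]
        intro hxS hxA
        exact (hAsub hxA).2 hxS
      simp [this]
    have step1 : μ (({x | g x ≠ f A x} ∩ A) ∪ (A \ SA A)) = 0 := by
      refine le_antisymm (le_trans (measure_union_le _ _) ?_) zero_le
      rw [hnull1, hnull2, add_zero]
    have : μ A = 0 := by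
      refine le_antisymm (le_trans (measure_mono hcover) (le_trans (measure_union_le _ _) ?_)) zero_le
      rw [step1, hSA0, add_zero]
    exact absurd this hApos.ne'
  · -- S is least
    intro C hC hubC
    by_contra hne
    have hSC : MeasurableSet (S \ C) := hSm.diff hC
    obtain ⟨A, hAm, hAsub, hApos, hAfin⟩ :
        ∃ A, MeasurableSet A ∧ A ⊆ S \ C ∧ 0 < μ A ∧ μ A < ∞ := by
      rcases eq_or_ne (μ (S \ C)) ∞ with h | h
      · exact hsf _ hSC h
      · exact ⟨S \ C, hSC, subset_rfl, pos_iff_ne_zero.mpr hne, lt_top_iff_ne_top.mpr h⟩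
    obtain ⟨hSAm, hSAsub, hub, hmin⟩ := hSA A ⟨hAm, hAfin⟩
    have hSAnull : μ (SA A) = 0 := by
      have h1 : μ (SA A \ C) = 0 :=
        hmin C hC fun B hB => measure_mono_null (diff_subset_diff_left inter_subset_left)
          (hubC B hB)
      have h2 : SA A \ C = SA A := by
        ext x
        simp only [mem_diff, and_iff_left_iff_imp]
        intro hx
        exact (hAsub (hSAsub hx)).2
      rwa [h2] at h1
    have hnull2 : μ ({x | g x ≠ f A x} ∩ A) = 0 := by
      have := hgae A hAm hAfin
      rw [ae_iff, Measure.restrict_apply' hAm] at this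
      exact this
    have hcover : A ⊆ ({x | g x ≠ f A x} ∩ A) ∪ SA A ∪ (A \ S) := by
      intro x hxA
      by_cases h1 : g x = f A x
      · by_cases h2 : x ∈ SA A
        · exact Or.inl (Or.inr h2)
        · refine Or.inr ⟨hxA, ?_⟩
          simp only [hSdef, mem_setOf_eq, not_not, h1, hf]
          exact Set.indicator_of_notMem h2 _
      · exact Or.inl (Or.inl ⟨h1, hxA⟩)
    have hAS0 : μ (A \ S) = 0 := by
      have : A \ S = ∅ := by
        ext x
        simp only [mem_diff, mem_empty_iff_false, iff_false, not_and, not_not]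
        intro hxA
        exact (hAsub hxA).1
      simp [this]
    have step1 : μ (({x | g x ≠ f A x} ∩ A) ∪ SA A) = 0 := by
      refine le_antisymm (le_trans (measure_union_le _ _) ?_) zero_le
      rw [hSAnull, hnull2, add_zero]
    have : μ A = 0 := by
      refine le_antisymm (le_trans (measure_mono hcover) (le_trans (measure_union_le _ _) ?_)) zero_le
      rw [step1, hAS0, add_zero]
    exact absurd this hApos.ne'
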